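/- (Echo state property under ‖W_x‖ < 1) Let W_x ∈ ℝ^{n×n} with ‖W_x‖ < 1 and W_in ∈ ℝ^{n×m}, and let ω : ℤ → ℝᵐ be any bi-infinite input sequence. If x', x'' : ℤ → ℝⁿ are two complete state sequences compatible with the Echo State Network dynamics, i.e. x'(k+1) = tanh(W_x x'(k) + W_in ω(k)) and x''(k+1) = tanh(W_x x''(k) + W_in ω(k)) for all k ∈ ℤ, then x'(k) = x''(k) for all k ∈ ℤ. -/

import Mathlib

open Matrix
open scoped Matrix.Norms.L2Operator

private lemma tanh_hasDerivAt (x : ℝ) :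
    HasDerivAt Real.tanh (1 / Real.cosh x ^ 2) x := by
  have h := (Real.hasDerivAt_sinh x).div (Real.hasDerivAt_cosh x)
    (ne_of_gt (Real.cosh_pos x))
  have hident : (Real.cosh x * Real.cosh x - Real.sinh x * Real.sinh x) / Real.cosh x ^ 2
      = 1 / Real.cosh x ^ 2 := by
    have := Real.cosh_sq_sub_sinh_sq x
    rw [← this]; ring
  have hfun : (Real.sinh / Real.cosh) = Real.tanh := by
    funext y; simp only [Pi.div_apply, Real.tanh_eq_sinh_div_cosh]
  rw [hfun, hident] at h
  exact h

private lemma tanh_lip (a b : ℝ) : |Real.tanh a - Real.tanh b| ≤ |a - b| := by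
  have h := Convex.norm_image_sub_le_of_norm_hasDerivWithin_le
    (f := Real.tanh) (f' := fun x => 1 / Real.cosh x ^ 2) (C := 1) (s := Set.univ)
    (fun x _ => (tanh_hasDerivAt x).hasDerivWithinAt)
    (fun x _ => by
      rw [Real.norm_eq_abs, abs_of_pos (by positivity)]
      rw [div_le_one (by positivity)]
      nlinarith [Real.one_le_cosh x])
    convex_univ (Set.mem_univ b) (Set.mem_univ a)
  simpa using h

private lemma abs_tanh_le_one (x : ℝ) : |Real.tanh x| ≤ 1 := by
  rw [Real.tanh_eq_sinh_div_cosh, abs_div, abs_of_pos (Real.cosh_pos x),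
    div_le_one (Real.cosh_pos x)]
  have h := Real.cosh_sq_sub_sinh_sq x
  nlinarith [abs_nonneg (Real.sinh x), sq_abs (Real.sinh x), Real.cosh_pos x]

set_option synthInstance.maxHeartbeats 1000000 in
set_option maxHeartbeats 2000000 in
theorem esn_echo_state_property {n m : ℕ}
    (Wx : Matrix (Fin n) (Fin n) ℝ) (Win : Matrix (Fin n) (Fin m) ℝ)
    (hW : ‖Wx‖ < 1)
    (ω : ℤ → EuclideanSpace ℝ (Fin m)) (x' x'' : ℤ → EuclideanSpace ℝ (Fin n))
    (hx' : ∀ k : ℤ, x' (k + 1) =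
      (WithLp.toLp 2 (fun i => Real.tanh ((Matrix.toEuclideanLin Wx (x' k) + Matrix.toEuclideanLin Win (ω k)) i)) :
        EuclideanSpace ℝ (Fin n)))
    (hx'' : ∀ k : ℤ, x'' (k + 1) =
      (WithLp.toLp 2 (fun i => Real.tanh ((Matrix.toEuclideanLin Wx (x'' k) + Matrix.toEuclideanLin Win (ω k)) i)) :
        EuclideanSpace ℝ (Fin n))) :
    ∀ k : ℤ, x' k = x'' k := by
  have hWnn : (0:ℝ) ≤ ‖Wx‖ := norm_nonneg _
  -- operator norm bound
  have hop : ∀ v : EuclideanSpace ℝ (Fin n),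
      ‖Matrix.toEuclideanLin Wx v‖ ≤ ‖Wx‖ * ‖v‖ := by
    intro v
    have := (Matrix.toEuclideanLin.trans LinearMap.toContinuousLinearMap Wx).le_opNorm v
    rw [Matrix.l2_opNorm_def]
    simpa using this
  -- contraction step
  have hstep : ∀ k : ℤ, ‖x' (k+1) - x'' (k+1)‖ ≤ ‖Wx‖ * ‖x' k - x'' k‖ := by
    intro k
    set u : EuclideanSpace ℝ (Fin n) :=
      Matrix.toEuclideanLin Wx (x' k) + Matrix.toEuclideanLin Win (ω k) with hu
    set v : EuclideanSpace ℝ (Fin n) :=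
      Matrix.toEuclideanLin Wx (x'' k) + Matrix.toEuclideanLin Win (ω k) with hv
    have h1 : ‖x' (k+1) - x'' (k+1)‖ ≤ ‖u - v‖ := by
      rw [hx' k, hx'' k, EuclideanSpace.norm_eq, EuclideanSpace.norm_eq]
      apply Real.sqrt_le_sqrt
      apply Finset.sum_le_sum
      intro i _
      have := tanh_lip (u i) (v i)
      simp only [Real.norm_eq_abs]
      have habs : |Real.tanh (u i) - Real.tanh (v i)| ≤ |u i - v i| := this
      calc |(WithLp.toLp 2 (fun i => Real.tanh (u i)) : EuclideanSpace ℝ (Fin n)) i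
              - (WithLp.toLp 2 (fun i => Real.tanh (v i)) : EuclideanSpace ℝ (Fin n)) i| ^ 2
          = |Real.tanh (u i) - Real.tanh (v i)| ^ 2 := rfl
        _ ≤ |u i - v i| ^ 2 := by
            exact pow_le_pow_left₀ (abs_nonneg _) habs 2
        _ = |(u - v) i| ^ 2 := by simp
    have h2 : u - v = Matrix.toEuclideanLin Wx (x' k - x'' k) := by
      rw [hu, hv, map_sub]; abel
    calc ‖x' (k+1) - x'' (k+1)‖ ≤ ‖u - v‖ := h1
      _ = ‖Matrix.toEuclideanLin Wx (x' k - x'' k)‖ := by rw [h2]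
      _ ≤ ‖Wx‖ * ‖x' k - x'' k‖ := hop _
  -- uniform bound
  have hbound : ∀ k : ℤ, ‖x' k - x'' k‖ ≤ 2 * Real.sqrt n := by
    intro k
    have hb : ∀ (y : ℤ → EuclideanSpace ℝ (Fin n))
        (hy : ∀ j : ℤ, y (j + 1) =
          (WithLp.toLp 2 (fun i => Real.tanh ((Matrix.toEuclideanLin Wx (y j)
            + Matrix.toEuclideanLin Win (ω j)) i)) : EuclideanSpace ℝ (Fin n))),
        ‖y k‖ ≤ Real.sqrt n := by
      intro y hy
      have hk : y k = (WithLp.toLp 2 (fun i => Real.tanh ((Matrix.toEuclideanLin Wx (y (k-1))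
          + Matrix.toEuclideanLin Win (ω (k-1))) i)) : EuclideanSpace ℝ (Fin n)) := by
        have := hy (k - 1); simpa using this
      rw [hk, EuclideanSpace.norm_eq]
      have : Real.sqrt (n : ℝ) = Real.sqrt (∑ _i : Fin n, (1:ℝ)) := by simp
      rw [this]
      apply Real.sqrt_le_sqrt
      apply Finset.sum_le_sum
      intro i _
      simp only [Real.norm_eq_abs]
      have := abs_tanh_le_one ((Matrix.toEuclideanLin Wx (y (k-1))
        + Matrix.toEuclideanLin Win (ω (k-1))) i)
      calc |Real.tanh ((Matrix.toEuclideanLin Wx (y (k-1))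
            + Matrix.toEuclideanLin Win (ω (k-1))) i)| ^ 2 ≤ 1 ^ 2 :=
          pow_le_pow_left₀ (abs_nonneg _) this 2
        _ = 1 := one_pow 2
    calc ‖x' k - x'' k‖ ≤ ‖x' k‖ + ‖x'' k‖ := norm_sub_le _ _
      _ ≤ Real.sqrt n + Real.sqrt n := add_le_add (hb x' hx') (hb x'' hx'')
      _ = 2 * Real.sqrt n := by ring
  -- iterate contraction
  have hiter : ∀ (j : ℕ) (k : ℤ), ‖x' k - x'' k‖ ≤ ‖Wx‖ ^ j * (2 * Real.sqrt n) := by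
    intro j
    induction j with
    | zero => intro k; simpa using hbound k
    | succ j ih =>
      intro k
      have h1 : ‖x' k - x'' k‖ ≤ ‖Wx‖ * ‖x' (k-1) - x'' (k-1)‖ := by
        have := hstep (k - 1); simpa using this
      calc ‖x' k - x'' k‖ ≤ ‖Wx‖ * ‖x' (k-1) - x'' (k-1)‖ := h1
        _ ≤ ‖Wx‖ * (‖Wx‖ ^ j * (2 * Real.sqrt n)) :=
            mul_le_mul_of_nonneg_left (ih (k-1)) hWnn
        _ = ‖Wx‖ ^ (j+1) * (2 * Real.sqrt n) := by ring
  intro k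
  have hlim : Filter.Tendsto (fun j : ℕ => ‖Wx‖ ^ j * (2 * Real.sqrt n))
      Filter.atTop (nhds 0) := by
    have h0 : Filter.Tendsto (fun j : ℕ => ‖Wx‖ ^ j) Filter.atTop (nhds 0) :=
      tendsto_pow_atTop_nhds_zero_of_lt_one hWnn hW
    simpa using h0.mul_const (2 * Real.sqrt n)
  have hle : ‖x' k - x'' k‖ ≤ 0 :=
    ge_of_tendsto hlim (Filter.Eventually.of_forall (fun j => hiter j k))
  have : x' k - x'' k = 0 := by
    rwa [← norm_le_zero_iff]
  exact sub_eq_zero.mp this
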